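/- Let P ∈ ℝ^{m×n} be an entrywise nonnegative matrix whose entries sum to 1, with p* = max(max_i Σ_j P_{i,j}, max_j Σ_i P_{i,j}). Then for all matrices A ∈ ℝ^{m×d}, M ∈ ℝ^{d×d}, B ∈ ℝ^{n×d}, the P-weighted entrywise absolute sum satisfies Σ_{i,j} P_{i,j} · |(A M B^⊤)_{i,j}| ≤ p* · ‖A‖ · ‖M‖_* · ‖B‖, where ‖·‖ is the spectral norm and ‖·‖_* is the nuclear norm. -/

import Mathlib

open Matrix Finset
open scoped BigOperators

/-- Spectral norm (largest singular value) of a real matrix. -/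
noncomputable def specNorm {m n : ℕ} (A : Matrix (Fin m) (Fin n) ℝ) : ℝ :=
  ‖LinearMap.toContinuousLinearMap (Matrix.toEuclideanLin A)‖

/-- Nuclear norm (sum of singular values) of a real matrix. -/
noncomputable def nuclearNorm {m n : ℕ} (A : Matrix (Fin m) (Fin n) ℝ) : ℝ :=
  ∑ j, Real.sqrt ((Matrix.isHermitian_conjTranspose_mul_self A).eigenvalues j)

/-- Operator norm bound for `mulVec`, in sqrt-of-sum-of-squares form. -/
lemma specNorm_mulVec_le' {m d : ℕ} (A : Matrix (Fin m) (Fin d) ℝ) (x : Fin d → ℝ) :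
    Real.sqrt (∑ i, ((A *ᵥ x) i) ^ 2) ≤ specNorm A * Real.sqrt (∑ a, x a ^ 2) := by
  have h := (LinearMap.toContinuousLinearMap (Matrix.toEuclideanLin A)).le_opNorm
      ((WithLp.equiv 2 (Fin d → ℝ)).symm x)
  have e1 : ‖LinearMap.toContinuousLinearMap (Matrix.toEuclideanLin A)
      ((WithLp.equiv 2 (Fin d → ℝ)).symm x)‖ = Real.sqrt (∑ i, ((A *ᵥ x) i) ^ 2) := by
    rw [LinearMap.coe_toContinuousLinearMap', WithLp.equiv_symm_apply, Matrix.toEuclideanLin_apply_piLp_toLp,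
      EuclideanSpace.norm_eq]
    simp [Real.norm_eq_abs, sq_abs]
  have e2 : ‖(WithLp.equiv 2 (Fin d → ℝ)).symm x‖ = Real.sqrt (∑ a, x a ^ 2) := by
    rw [EuclideanSpace.norm_eq]
    simp [Real.norm_eq_abs, sq_abs]
  rwa [e1, e2] at h

/-- Completeness of the eigenvector basis, entrywise. -/
lemma ortho_complete' {d : ℕ} {N : Matrix (Fin d) (Fin d) ℝ} (hN : N.IsHermitian) (b c : Fin d) :
    ∑ k, hN.eigenvectorBasis k b * hN.eigenvectorBasis k c = if b = c then 1 else 0 := by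
  have h : (hN.eigenvectorUnitary : Matrix (Fin d) (Fin d) ℝ) *
      star (hN.eigenvectorUnitary : Matrix (Fin d) (Fin d) ℝ) = 1 :=
    Matrix.mem_unitaryGroup_iff.mp hN.eigenvectorUnitary.2
  have := Matrix.ext_iff.mpr h b c
  simpa [Matrix.mul_apply, Matrix.one_apply, Matrix.star_apply] using this

/-- Each eigenvector has unit Euclidean norm, entrywise form. -/
lemma eigbasis_sum_sq {d : ℕ} {N : Matrix (Fin d) (Fin d) ℝ} (hN : N.IsHermitian) (k : Fin d) :
    ∑ a, (hN.eigenvectorBasis k a) ^ 2 = 1 := by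
  have h1 : ‖hN.eigenvectorBasis k‖ = 1 := hN.eigenvectorBasis.orthonormal.1 k
  rw [EuclideanSpace.norm_eq] at h1
  have h2 := congrArg (· ^ 2) h1
  simp only [Real.sq_sqrt (by positivity : (0:ℝ) ≤ ∑ a, ‖(hN.eigenvectorBasis k) a‖ ^ 2),
    one_pow] at h2
  simpa [Real.norm_eq_abs, sq_abs] using h2

/-- `‖M vₖ‖² = λₖ` for the eigenvectors of `MᵀM`. -/
lemma mulVec_eig_sq' {d : ℕ} (Mmat : Matrix (Fin d) (Fin d) ℝ) (k : Fin d) :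
    ∑ a, ((Mmat *ᵥ ⇑((Matrix.isHermitian_conjTranspose_mul_self Mmat).eigenvectorBasis k)) a) ^ 2
      = (Matrix.isHermitian_conjTranspose_mul_self Mmat).eigenvalues k := by
  set hM := Matrix.isHermitian_conjTranspose_mul_self Mmat with hMdef
  set v : Fin d → ℝ := ⇑(hM.eigenvectorBasis k) with hv
  have hnorm : ∑ a, v a ^ 2 = 1 := eigbasis_sum_sq hM k
  have heig : (Mmatᴴ * Mmat) *ᵥ v = hM.eigenvalues k • v := hM.mulVec_eigenvectorBasis k
  have h2 : v ⬝ᵥ ((Mmatᴴ * Mmat) *ᵥ v) = hM.eigenvalues k := by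
    rw [heig]
    simp only [dotProduct, Pi.smul_apply, smul_eq_mul]
    rw [show ∑ a, v a * (hM.eigenvalues k * v a) = hM.eigenvalues k * ∑ a, v a ^ 2 by
      rw [Finset.mul_sum]; exact Finset.sum_congr rfl fun a _ => by ring]
    rw [hnorm, mul_one]
  have h3 : v ⬝ᵥ ((Mmatᴴ * Mmat) *ᵥ v) = ∑ a, ((Mmat *ᵥ v) a) ^ 2 := by
    rw [← Matrix.mulVec_mulVec]
    simp only [dotProduct, mulVec, conjTranspose_apply, star_trivial, Finset.mul_sum]
    rw [Finset.sum_comm]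
    refine Finset.sum_congr rfl fun a _ => ?_
    rw [sq, Finset.sum_mul]
    refine Finset.sum_congr rfl fun c _ => ?_
    rw [Finset.mul_sum]
    exact Finset.sum_congr rfl fun e _ => by ring
  rw [← h3, h2]

/-- Weighted Cauchy–Schwarz with marginal bounds. -/
lemma weighted_cs' {m n : ℕ} (P : Matrix (Fin m) (Fin n) ℝ) (hP : ∀ i j, 0 ≤ P i j)
    (pstar : ℝ) (hrow : ∀ i, ∑ j, P i j ≤ pstar) (hcol : ∀ j, ∑ i, P i j ≤ pstar)
    (hps : 0 ≤ pstar) (x : Fin m → ℝ) (y : Fin n → ℝ) :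
    ∑ i, ∑ j, P i j * (|x i| * |y j|) ≤
      pstar * (Real.sqrt (∑ i, x i ^ 2) * Real.sqrt (∑ j, y j ^ 2)) := by
  have key : ∑ i, ∑ j, P i j * (|x i| * |y j|)
      = ∑ p ∈ univ ×ˢ univ,
          (Real.sqrt (P p.1 p.2) * |x p.1|) * (Real.sqrt (P p.1 p.2) * |y p.2|) := by
    rw [Finset.sum_product]
    refine Finset.sum_congr rfl fun i _ => Finset.sum_congr rfl fun j _ => ?_
    rw [show (Real.sqrt (P i j) * |x i|) * (Real.sqrt (P i j) * |y j|)
        = (Real.sqrt (P i j) * Real.sqrt (P i j)) * (|x i| * |y j|) by ring,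
      Real.mul_self_sqrt (hP i j)]
  have h1 : ∑ p ∈ univ ×ˢ univ, (Real.sqrt (P p.1 p.2) * |x p.1|) ^ 2
      ≤ pstar * ∑ i, x i ^ 2 := by
    have : ∑ p ∈ univ ×ˢ univ, (Real.sqrt (P p.1 p.2) * |x p.1|) ^ 2
        = ∑ i, (∑ j, P i j) * x i ^ 2 := by
      rw [Finset.sum_product]
      refine Finset.sum_congr rfl fun i _ => ?_
      rw [Finset.sum_mul]
      refine Finset.sum_congr rfl fun j _ => ?_
      rw [mul_pow, Real.sq_sqrt (hP i j), sq_abs]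
    rw [this, Finset.mul_sum]
    exact Finset.sum_le_sum fun i _ =>
      mul_le_mul_of_nonneg_right (hrow i) (sq_nonneg _)
  have h2 : ∑ p ∈ univ ×ˢ univ, (Real.sqrt (P p.1 p.2) * |y p.2|) ^ 2
      ≤ pstar * ∑ j, y j ^ 2 := by
    have : ∑ p ∈ univ ×ˢ univ, (Real.sqrt (P p.1 p.2) * |y p.2|) ^ 2
        = ∑ j, (∑ i, P i j) * y j ^ 2 := by
      rw [Finset.sum_product, Finset.sum_comm]
      refine Finset.sum_congr rfl fun j _ => ?_
      rw [Finset.sum_mul]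
      refine Finset.sum_congr rfl fun i _ => ?_
      rw [mul_pow, Real.sq_sqrt (hP i j), sq_abs]
    rw [this, Finset.mul_sum]
    exact Finset.sum_le_sum fun j _ =>
      mul_le_mul_of_nonneg_right (hcol j) (sq_nonneg _)
  rw [key]
  refine (Real.sum_mul_le_sqrt_mul_sqrt _ _ _).trans ?_
  calc Real.sqrt (∑ p ∈ univ ×ˢ univ, (Real.sqrt (P p.1 p.2) * |x p.1|) ^ 2) *
        Real.sqrt (∑ p ∈ univ ×ˢ univ, (Real.sqrt (P p.1 p.2) * |y p.2|) ^ 2)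
      ≤ Real.sqrt (pstar * ∑ i, x i ^ 2) * Real.sqrt (pstar * ∑ j, y j ^ 2) :=
        mul_le_mul (Real.sqrt_le_sqrt h1) (Real.sqrt_le_sqrt h2)
          (Real.sqrt_nonneg _) (Real.sqrt_nonneg _)
    _ = pstar * (Real.sqrt (∑ i, x i ^ 2) * Real.sqrt (∑ j, y j ^ 2)) := by
        rw [Real.sqrt_mul hps, Real.sqrt_mul hps]
        rw [show (Real.sqrt pstar * Real.sqrt (∑ i, x i ^ 2)) *
            (Real.sqrt pstar * Real.sqrt (∑ j, y j ^ 2))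
            = (Real.sqrt pstar * Real.sqrt pstar) *
              (Real.sqrt (∑ i, x i ^ 2) * Real.sqrt (∑ j, y j ^ 2)) by ring,
          Real.mul_self_sqrt hps]

/-- For an entrywise nonnegative matrix `P` with entries summing to `1` and
`p* = max (max_i Σ_j P_{i,j}) (max_j Σ_i P_{i,j})`, and any matrices `A ∈ ℝ^{m×d}`,
`M ∈ ℝ^{d×d}`, `B ∈ ℝ^{n×d}`:
`Σ_{i,j} P_{i,j} |(A M Bᵀ)_{i,j}| ≤ p* ‖A‖ ‖M‖_* ‖B‖`. -/
theorem weighted_abs_sum_le_pstar_spec_nuclear {m n d : ℕ} (hm : 0 < m) (hn : 0 < n)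
    (P : Matrix (Fin m) (Fin n) ℝ)
    (hPnonneg : ∀ i j, 0 ≤ P i j)
    (hPsum : ∑ i, ∑ j, P i j = 1)
    (pstar : ℝ)
    (hpstar : pstar = max (⨆ i : Fin m, ∑ j, P i j) (⨆ j : Fin n, ∑ i, P i j))
    (A : Matrix (Fin m) (Fin d) ℝ) (Mmat : Matrix (Fin d) (Fin d) ℝ)
    (B : Matrix (Fin n) (Fin d) ℝ) :
    ∑ i, ∑ j, P i j * |(A * Mmat * Bᵀ) i j| ≤
      pstar * specNorm A * nuclearNorm Mmat * specNorm B := by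
  classical
  set hM := Matrix.isHermitian_conjTranspose_mul_self Mmat with hMdef
  set v : Fin d → Fin d → ℝ := fun k => ⇑(hM.eigenvectorBasis k) with hv
  have hrow : ∀ i, ∑ j, P i j ≤ pstar := fun i => by
    rw [hpstar]
    exact le_trans (le_ciSup (f := fun i : Fin m => ∑ j, P i j)
      (Set.Finite.bddAbove (Set.finite_range _)) i) (le_max_left _ _)
  have hcol : ∀ j, ∑ i, P i j ≤ pstar := fun j => by
    rw [hpstar]
    exact le_trans (le_ciSup (f := fun j : Fin n => ∑ i, P i j)
      (Set.Finite.bddAbove (Set.finite_range _)) j) (le_max_right _ _)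
  have hps : 0 ≤ pstar :=
    le_trans (Finset.sum_nonneg fun j _ => hPnonneg ⟨0, hm⟩ j) (hrow ⟨0, hm⟩)
  have hdelta : ∀ b c : Fin d, ∑ k, v k b * v k c = if b = c then 1 else 0 :=
    fun b c => ortho_complete' hM b c
  have hMab : ∀ a b, Mmat a b = ∑ k, (Mmat *ᵥ v k) a * v k b := by
    intro a b
    have h0 : Mmat a b = ∑ c, Mmat a c * (if c = b then 1 else 0) := by simp
    rw [h0]
    simp_rw [← hdelta]
    simp_rw [Finset.mul_sum]
    rw [Finset.sum_comm]
    refine Finset.sum_congr rfl fun k _ => ?_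
    rw [show (Mmat *ᵥ v k) a = ∑ c, Mmat a c * v k c from rfl, Finset.sum_mul]
    exact Finset.sum_congr rfl fun c _ => by ring
  have hentry : ∀ i j, (A * Mmat * Bᵀ) i j
      = ∑ k, (A *ᵥ (Mmat *ᵥ v k)) i * (B *ᵥ v k) j := by
    intro i j
    have e1 : (A * Mmat * Bᵀ) i j = ∑ b, ∑ a, A i a * Mmat a b * B j b := by
      simp only [Matrix.mul_apply, Matrix.transpose_apply, Finset.sum_mul]
    rw [e1, Finset.sum_comm]
    calc ∑ a, ∑ b, A i a * Mmat a b * B j b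
        = ∑ a, ∑ b, A i a * (∑ k, (Mmat *ᵥ v k) a * v k b) * B j b := by
          simp_rw [← hMab]
      _ = ∑ a, ∑ b, ∑ k, (A i a * (Mmat *ᵥ v k) a) * (B j b * v k b) := by
          refine Finset.sum_congr rfl fun a _ => Finset.sum_congr rfl fun b _ => ?_
          rw [Finset.mul_sum, Finset.sum_mul]
          exact Finset.sum_congr rfl fun k _ => by ring
      _ = ∑ a, ∑ k, ∑ b, (A i a * (Mmat *ᵥ v k) a) * (B j b * v k b) :=
          Finset.sum_congr rfl fun a _ => Finset.sum_comm
      _ = ∑ k, ∑ a, ∑ b, (A i a * (Mmat *ᵥ v k) a) * (B j b * v k b) := Finset.sum_comm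
      _ = ∑ k, (∑ a, A i a * (Mmat *ᵥ v k) a) * (∑ b, B j b * v k b) := by
          refine Finset.sum_congr rfl fun k _ => ?_
          rw [Finset.sum_mul_sum]
      _ = ∑ k, (A *ᵥ (Mmat *ᵥ v k)) i * (B *ᵥ v k) j := rfl
  calc ∑ i, ∑ j, P i j * |(A * Mmat * Bᵀ) i j|
      ≤ ∑ i, ∑ j, ∑ k, P i j * (|(A *ᵥ (Mmat *ᵥ v k)) i| * |(B *ᵥ v k) j|) := by
        refine Finset.sum_le_sum fun i _ => Finset.sum_le_sum fun j _ => ?_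
        rw [← Finset.mul_sum]
        refine mul_le_mul_of_nonneg_left ?_ (hPnonneg i j)
        rw [hentry i j]
        refine (Finset.abs_sum_le_sum_abs _ _).trans ?_
        exact Finset.sum_le_sum fun k _ => le_of_eq (abs_mul _ _)
    _ = ∑ i, ∑ k, ∑ j, P i j * (|(A *ᵥ (Mmat *ᵥ v k)) i| * |(B *ᵥ v k) j|) :=
        Finset.sum_congr rfl fun i _ => Finset.sum_comm
    _ = ∑ k, ∑ i, ∑ j, P i j * (|(A *ᵥ (Mmat *ᵥ v k)) i| * |(B *ᵥ v k) j|) := Finset.sum_comm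
    _ ≤ ∑ k, pstar * (Real.sqrt (∑ i, ((A *ᵥ (Mmat *ᵥ v k)) i) ^ 2) *
          Real.sqrt (∑ j, ((B *ᵥ v k) j) ^ 2)) :=
        Finset.sum_le_sum fun k _ => weighted_cs' P hPnonneg pstar hrow hcol hps _ _
    _ ≤ ∑ k, pstar * ((specNorm A * Real.sqrt (hM.eigenvalues k)) * specNorm B) := by
        refine Finset.sum_le_sum fun k _ => ?_
        refine mul_le_mul_of_nonneg_left ?_ hps
        have ha : Real.sqrt (∑ i, ((A *ᵥ (Mmat *ᵥ v k)) i) ^ 2)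
            ≤ specNorm A * Real.sqrt (hM.eigenvalues k) := by
          have h := specNorm_mulVec_le' A (Mmat *ᵥ v k)
          rwa [show ∑ a, ((Mmat *ᵥ v k) a) ^ 2 = hM.eigenvalues k from mulVec_eig_sq' Mmat k]
            at h
        have hb : Real.sqrt (∑ j, ((B *ᵥ v k) j) ^ 2) ≤ specNorm B := by
          have h := specNorm_mulVec_le' B (v k)
          rwa [show ∑ a, (v k a) ^ 2 = 1 from eigbasis_sum_sq hM k, Real.sqrt_one, mul_one] at h
        exact mul_le_mul ha hb (Real.sqrt_nonneg _)
          (mul_nonneg (norm_nonneg _) (Real.sqrt_nonneg _))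
    _ = pstar * specNorm A * nuclearNorm Mmat * specNorm B := by
        simp_rw [show ∀ k : Fin d, pstar * ((specNorm A * Real.sqrt (hM.eigenvalues k)) *
            specNorm B) = (pstar * specNorm A * specNorm B) * Real.sqrt (hM.eigenvalues k)
          from fun k => by ring, ← Finset.mul_sum]
        simp only [nuclearNorm, hMdef]
        ring
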